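/- For each fixed B ∈ (B₁, B̄), the map A ↦ Λ₂(A,B) is continuously differentiable on (A̲(B), Ā(B)) with ∂Λ₂(A,B)/∂A = u(A,B) − U(A,B) > 0, hence strictly increasing in A, and Λ₂(A,B) → 0 as A ↓ A̲(B). -/

import Mathlib

open MeasureTheory Set Filter Topology

noncomputable def gfun (μ σ a : ℝ) (h : ℝ → ℝ) (A B x : ℝ) : ℝ :=
  A - B * Real.exp (-(2 * μ / σ ^ 2) * (x - a)) -
    (2 * μ / σ ^ 2) / μ * ∫ y in a..x, h y * Real.exp (-(2 * μ / σ ^ 2) * (x - y))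

noncomputable def F1 (μ σ a : ℝ) (h : ℝ → ℝ) (B x : ℝ) : ℝ :=
  B - 1 / μ * ∫ y in a..x, deriv h y * Real.exp ((2 * μ / σ ^ 2) * (y - a))

noncomputable def Bbar (μ σ a : ℝ) (h : ℝ → ℝ) : ℝ :=
  -(1 / μ) * ∫ y in Set.Iic a, deriv h y * Real.exp ((2 * μ / σ ^ 2) * (y - a))

noncomputable def Jfun (a : ℝ) (h : ℝ → ℝ) (L x : ℝ) : ℝ := ∫ y in a..x, h y * Real.exp (L * y)

lemma gfun_repr (μ σ a : ℝ) (h : ℝ → ℝ) (A B x : ℝ) :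
    gfun μ σ a h A B x = A - B * Real.exp (-(2 * μ / σ ^ 2) * (x - a)) -
      (2 * μ / σ ^ 2) / μ * (Real.exp (-(2 * μ / σ ^ 2) * x) * Jfun a h (2 * μ / σ ^ 2) x) := by
  unfold gfun Jfun
  have : ∫ y in a..x, h y * Real.exp (-(2 * μ / σ ^ 2) * (x - y))
      = Real.exp (-(2 * μ / σ ^ 2) * x) * ∫ y in a..x, h y * Real.exp (2 * μ / σ ^ 2 * y) := by
    rw [← intervalIntegral.integral_const_mul]
    apply intervalIntegral.integral_congr
    intro y _
    simp only []
    rw [mul_left_comm, ← Real.exp_add]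
    congr 1
    ring_nf
  rw [this]

lemma Jfun_hasDerivAt (a : ℝ) {h : ℝ → ℝ} (hcont : Continuous h) (L x : ℝ) :
    HasDerivAt (Jfun a h L) (h x * Real.exp (L * x)) x := by
  have hc : Continuous fun y => h y * Real.exp (L * y) := by continuity
  exact intervalIntegral.integral_hasDerivAt_right (hc.intervalIntegrable a x)
    (hc.stronglyMeasurableAtFilter _ _) hc.continuousAt

lemma Jfun_continuous (a : ℝ) {h : ℝ → ℝ} (hcont : Continuous h) (L : ℝ) :
    Continuous (Jfun a h L) :=
  continuous_iff_continuousAt.2 fun x => (Jfun_hasDerivAt a hcont L x).continuousAt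

section Aux
variable {μ σ a : ℝ} {h : ℝ → ℝ}

lemma derivh_contAt (hC2 : ∀ x : ℝ, x ≠ a → ContDiffAt ℝ 2 h x) {x : ℝ} (hx : x ≠ a) :
    ContinuousAt (deriv h) x := by
  obtain ⟨u, hu, hcd⟩ := (hC2 x hx).contDiffOn (le_refl 2) (by norm_num)
  obtain ⟨t, htu, hto, hxt⟩ := mem_nhds_iff.1 hu
  have := (hcd.mono htu).continuousOn_deriv_of_isOpen hto (by norm_num)
  exact (this.continuousAt (hto.mem_nhds hxt))

lemma derivh_mono (hconv : ConvexOn ℝ Set.univ h)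
    (hC2 : ∀ x : ℝ, x ≠ a → ContDiffAt ℝ 2 h x) :
    MonotoneOn (deriv h) (Set.Ioi a) := by
  have : ConvexOn ℝ (Set.Ioi a) h := hconv.subset (Set.subset_univ _) (convex_Ioi a)
  exact this.monotoneOn_deriv fun x hx =>
    ((hC2 x (ne_of_gt hx)).differentiableAt (by norm_num))

lemma integ_h' (hμ : 0 < μ) (hσ : 0 < σ)
    (hconv : ConvexOn ℝ Set.univ h) (hcont : Continuous h)
    (hC2 : ∀ x : ℝ, x ≠ a → ContDiffAt ℝ 2 h x)
    (hpos : ∀ x, a < x → 0 < deriv h x)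
    (hint : IntegrableOn (fun y => |deriv h y| * Real.exp ((2 * μ / σ ^ 2) * (y - a))) (Set.Iic a)) :
    ∀ c d : ℝ, IntervalIntegrable (fun y => deriv h y * Real.exp ((2 * μ / σ ^ 2) * (y - a)))
      volume c d := by
  set L := 2 * μ / σ ^ 2 with hLdef
  have hL : 0 < L := by positivity
  set f : ℝ → ℝ := fun y => deriv h y * Real.exp (L * (y - a)) with hfdef
  have hmeas : ∀ (ν : Measure ℝ), AEStronglyMeasurable f ν := fun ν =>
    ((measurable_deriv h).mul (by fun_prop)).aestronglyMeasurable
  have hIic : IntegrableOn f (Set.Iic a) := by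
    refine hint.mono' (hmeas _) (Filter.Eventually.of_forall fun y => ?_)
    simp only [f, Real.norm_eq_abs, abs_mul, abs_of_pos (Real.exp_pos _)]
    exact le_refl _

  have hIoc : ∀ d : ℝ, IntegrableOn f (Set.Ioc a d) := by
    intro d
    set e := max d (a + 1) with hedef
    have hae : a < e := lt_of_lt_of_le (by linarith) (le_max_right _ _)
    have hde : d ≤ e := le_max_left _ _
    have hbound : ∀ y ∈ Set.Ioc a d, ‖f y‖ ≤ deriv h e * Real.exp (L * (e - a)) := by
      rintro y ⟨hy1, hy2⟩
      have h1 : 0 < deriv h y := hpos y hy1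
      have h2 : deriv h y ≤ deriv h e :=
        derivh_mono hconv hC2 hy1 hae (hy2.trans hde)
      have h3 : Real.exp (L * (y - a)) ≤ Real.exp (L * (e - a)) := by
        apply Real.exp_le_exp.2; nlinarith
      rw [Real.norm_eq_abs, abs_mul, abs_of_pos h1, abs_of_pos (Real.exp_pos _)]
      exact mul_le_mul h2 h3 (Real.exp_pos _).le ((h1.trans_le h2).le)
    refine Integrable.mono' (g := fun _ => deriv h e * Real.exp (L * (e - a)))
      (integrableOn_const measure_Ioc_lt_top.ne enorm_ne_top) (hmeas _)
      ?_
    rw [ae_restrict_iff' measurableSet_Ioc]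
    exact Filter.Eventually.of_forall hbound
  have hIcc : ∀ c d : ℝ, IntegrableOn f (Set.Icc c d) := by
    intro c d
    have hsub : Set.Icc c d ⊆ Set.Iic a ∪ Set.Ioc a d := by
      intro y hy
      rcases le_or_gt y a with hya | hya
      · exact Or.inl hya
      · exact Or.inr ⟨hya, hy.2⟩
    exact (hIic.union (hIoc d)).mono_set hsub
  intro c d
  rcases le_total c d with hcd | hcd
  · exact (intervalIntegrable_iff_integrableOn_Icc_of_le hcd).2 (hIcc c d)
  · exact ((intervalIntegrable_iff_integrableOn_Icc_of_le hcd).2 (hIcc d c)).symm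

lemma parts_identity (hμ : 0 < μ) (hσ : 0 < σ)
    (hconv : ConvexOn ℝ Set.univ h) (hcont : Continuous h) (ha : h a = 0)
    (hC2 : ∀ x : ℝ, x ≠ a → ContDiffAt ℝ 2 h x)
    (hpos : ∀ x, a < x → 0 < deriv h x)
    (hint : IntegrableOn (fun y => |deriv h y| * Real.exp ((2 * μ / σ ^ 2) * (y - a))) (Set.Iic a))
    (x : ℝ) :
    ∫ y in a..x, deriv h y * Real.exp ((2 * μ / σ ^ 2) * (y - a))
      = h x * Real.exp ((2 * μ / σ ^ 2) * (x - a))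
        - (2 * μ / σ ^ 2) * Real.exp (-((2 * μ / σ ^ 2) * a)) * Jfun a h (2 * μ / σ ^ 2) x := by
  set L := 2 * μ / σ ^ 2 with hLdef
  set φ : ℝ → ℝ := fun y => h y * Real.exp (L * (y - a)) - L * Real.exp (-(L * a)) * Jfun a h L y
    with hφdef
  have hφa : φ a = 0 := by
    simp [φ, ha, Jfun, intervalIntegral.integral_same]
  have key : ∫ y in a..x, deriv h y * Real.exp (L * (y - a)) = φ x - φ a := by
    apply intervalIntegral.integral_eq_sub_of_hasDeriv_right
    · apply Continuous.continuousOn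
      have := Jfun_continuous a hcont L
      continuity
    · intro y hy
      have hya : y ≠ a := by
        rcases le_total a x with hax | hax
        · simp only [min_eq_left hax, max_eq_right hax] at hy
          exact ne_of_gt hy.1
        · simp only [min_eq_right hax, max_eq_left hax] at hy
          exact ne_of_lt hy.2
      have hdiff : HasDerivAt h (deriv h y) y :=
        ((hC2 y hya).differentiableAt (by norm_num)).hasDerivAt
      have hexp : HasDerivAt (fun z => Real.exp (L * (z - a))) (L * Real.exp (L * (y - a))) y := by
        have h1 : HasDerivAt (fun z => L * (z - a)) L y := by
          simpa using ((hasDerivAt_id y).sub_const a).const_mul L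
        simpa [mul_comm, Function.comp_def] using (Real.hasDerivAt_exp (L * (y - a))).comp y h1
      have hJ : HasDerivAt (Jfun a h L) (h y * Real.exp (L * y)) y := Jfun_hasDerivAt a hcont L y
      have : HasDerivAt φ (deriv h y * Real.exp (L * (y - a))
          + h y * (L * Real.exp (L * (y - a))) - L * Real.exp (-(L * a)) * (h y * Real.exp (L * y)))
          y := (hdiff.mul hexp).sub ((hJ.const_mul _))
      have heq : deriv h y * Real.exp (L * (y - a))
          + h y * (L * Real.exp (L * (y - a))) - L * Real.exp (-(L * a)) * (h y * Real.exp (L * y))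
          = deriv h y * Real.exp (L * (y - a)) := by
        have e : Real.exp (-(L * a)) * Real.exp (L * y) = Real.exp (L * (y - a)) := by
          rw [← Real.exp_add]; ring_nf
        linear_combination (-(h y * L)) * e
      rw [heq] at this
      exact this.hasDerivWithinAt
    · exact integ_h' hμ hσ hconv hcont hC2 hpos hint a x
  rw [key, hφa, sub_zero]

lemma F1_repr (hμ : 0 < μ) (hσ : 0 < σ)
    (hconv : ConvexOn ℝ Set.univ h) (hcont : Continuous h) (ha : h a = 0)
    (hC2 : ∀ x : ℝ, x ≠ a → ContDiffAt ℝ 2 h x)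
    (hpos : ∀ x, a < x → 0 < deriv h x)
    (hint : IntegrableOn (fun y => |deriv h y| * Real.exp ((2 * μ / σ ^ 2) * (y - a))) (Set.Iic a))
    (B x : ℝ) :
    F1 μ σ a h B x = B - 1 / μ * (h x * Real.exp ((2 * μ / σ ^ 2) * (x - a))
      - (2 * μ / σ ^ 2) * Real.exp (-((2 * μ / σ ^ 2) * a)) * Jfun a h (2 * μ / σ ^ 2) x) := by
  rw [F1, parts_identity hμ hσ hconv hcont ha hC2 hpos hint x]

lemma gfun_hasDerivAt (hμ : 0 < μ) (hσ : 0 < σ)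
    (hconv : ConvexOn ℝ Set.univ h) (hcont : Continuous h) (ha : h a = 0)
    (hC2 : ∀ x : ℝ, x ≠ a → ContDiffAt ℝ 2 h x)
    (hpos : ∀ x, a < x → 0 < deriv h x)
    (hint : IntegrableOn (fun y => |deriv h y| * Real.exp ((2 * μ / σ ^ 2) * (y - a))) (Set.Iic a))
    (A B x : ℝ) :
    HasDerivAt (gfun μ σ a h A B)
      ((2 * μ / σ ^ 2) * Real.exp (-(2 * μ / σ ^ 2) * (x - a)) * F1 μ σ a h B x) x := by
  set L := 2 * μ / σ ^ 2 with hLdef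
  have hL : 0 < L := by positivity
  have hrepr : gfun μ σ a h A B = fun x =>
      A - B * Real.exp (-L * (x - a)) - L / μ * (Real.exp (-(L * x)) * Jfun a h L x) := by
    funext z
    have := gfun_repr μ σ a h A B z
    rw [this, hLdef]
    ring_nf
  rw [hrepr]
  have hexp1 : HasDerivAt (fun z => Real.exp (-L * (z - a))) (-L * Real.exp (-L * (x - a))) x := by
    have h1 : HasDerivAt (fun z => -L * (z - a)) (-L) x := by
      simpa using ((hasDerivAt_id x).sub_const a).const_mul (-L)
    simpa [mul_comm, Function.comp_def] using (Real.hasDerivAt_exp (-L * (x - a))).comp x h1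
  have hexp2 : HasDerivAt (fun z => Real.exp (-(L * z))) (-L * Real.exp (-(L * x))) x := by
    have h1 : HasDerivAt (fun z : ℝ => -(L * z)) (-L) x := by
      simpa [neg_mul, Pi.neg_def] using ((hasDerivAt_id x).const_mul L).neg
    simpa [mul_comm, Function.comp_def] using (Real.hasDerivAt_exp (-(L * x))).comp x h1
  have hJ : HasDerivAt (Jfun a h L) (h x * Real.exp (L * x)) x := Jfun_hasDerivAt a hcont L x
  have hd := ((hasDerivAt_const x A).sub (hexp1.const_mul B)).sub
      ((hexp2.mul hJ).const_mul (L / μ))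
  refine hd.congr_deriv (Eq.symm ?_)
  rw [F1_repr hμ hσ hconv hcont ha hC2 hpos hint B x]
  have e1 : Real.exp (-(L * x)) * Real.exp (L * x) = 1 := by
    rw [← Real.exp_add]; ring_nf; exact Real.exp_zero
  have e2 : Real.exp (-L * (x - a)) * Real.exp (L * (x - a)) = 1 := by
    rw [← Real.exp_add]; ring_nf; exact Real.exp_zero
  have e3 : Real.exp (-L * (x - a)) * Real.exp (-(L * a)) = Real.exp (-(L * x)) := by
    rw [← Real.exp_add]; ring_nf
  have hμ' : μ ≠ 0 := ne_of_gt hμ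
  linear_combination (-(L/μ) * h x) * e2 + (L^2/μ * Jfun a h L x) * e3 + (L/μ * h x) * e1

lemma F1_sub (hμ : 0 < μ) (hσ : 0 < σ)
    (hconv : ConvexOn ℝ Set.univ h) (hcont : Continuous h)
    (hC2 : ∀ x : ℝ, x ≠ a → ContDiffAt ℝ 2 h x)
    (hpos : ∀ x, a < x → 0 < deriv h x)
    (hint : IntegrableOn (fun y => |deriv h y| * Real.exp ((2 * μ / σ ^ 2) * (y - a))) (Set.Iic a))
    (B x x' : ℝ) :
    F1 μ σ a h B x' - F1 μ σ a h B x
      = -(1/μ) * ∫ y in x..x', deriv h y * Real.exp ((2 * μ / σ ^ 2) * (y - a)) := by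
  unfold F1
  rw [← intervalIntegral.integral_add_adjacent_intervals
    (integ_h' hμ hσ hconv hcont hC2 hpos hint a x) (integ_h' hμ hσ hconv hcont hC2 hpos hint x x')]
  ring

lemma F1_strictMonoOn (hμ : 0 < μ) (hσ : 0 < σ)
    (hconv : ConvexOn ℝ Set.univ h) (hcont : Continuous h)
    (hC2 : ∀ x : ℝ, x ≠ a → ContDiffAt ℝ 2 h x)
    (hneg : ∀ x, x < a → deriv h x < 0)
    (hpos : ∀ x, a < x → 0 < deriv h x)
    (hint : IntegrableOn (fun y => |deriv h y| * Real.exp ((2 * μ / σ ^ 2) * (y - a))) (Set.Iic a))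
    (B : ℝ) : StrictMonoOn (F1 μ σ a h B) (Set.Iic a) := by
  intro x hx x' hx' hxx'
  have hI : (0 : ℝ) < ∫ y in x..x', -(deriv h y * Real.exp ((2 * μ / σ ^ 2) * (y - a))) := by
    apply intervalIntegral.intervalIntegral_pos_of_pos_on
      ((integ_h' hμ hσ hconv hcont hC2 hpos hint x x').neg)
    · intro y hy
      have hya : y < a := lt_of_lt_of_le hy.2 hx'
      have := hneg y hya
      have he := Real.exp_pos ((2 * μ / σ ^ 2) * (y - a))
      simp only [Pi.neg_apply]
      nlinarith
    · exact hxx'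
  rw [intervalIntegral.integral_neg] at hI
  have := F1_sub hμ hσ hconv hcont hC2 hpos hint B x x'
  have h1μ : 0 < 1/μ := by positivity
  nlinarith

lemma F1_strictAntiOn (hμ : 0 < μ) (hσ : 0 < σ)
    (hconv : ConvexOn ℝ Set.univ h) (hcont : Continuous h)
    (hC2 : ∀ x : ℝ, x ≠ a → ContDiffAt ℝ 2 h x)
    (hpos : ∀ x, a < x → 0 < deriv h x)
    (hint : IntegrableOn (fun y => |deriv h y| * Real.exp ((2 * μ / σ ^ 2) * (y - a))) (Set.Iic a))
    (B : ℝ) : StrictAntiOn (F1 μ σ a h B) (Set.Ici a) := by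
  intro x hx x' hx' hxx'
  have hI : (0 : ℝ) < ∫ y in x..x', deriv h y * Real.exp ((2 * μ / σ ^ 2) * (y - a)) := by
    apply intervalIntegral.intervalIntegral_pos_of_pos_on
      (integ_h' hμ hσ hconv hcont hC2 hpos hint x x')
    · intro y hy
      have hya : a < y := lt_of_le_of_lt hx hy.1
      have := hpos y hya
      have he := Real.exp_pos ((2 * μ / σ ^ 2) * (y - a))
      nlinarith
    · exact hxx'
  have := F1_sub hμ hσ hconv hcont hC2 hpos hint B x x'
  have h1μ : 0 < 1/μ := by positivity
  nlinarith

lemma gfun_continuous (hμ : 0 < μ) (hσ : 0 < σ)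
    (hconv : ConvexOn ℝ Set.univ h) (hcont : Continuous h) (ha : h a = 0)
    (hC2 : ∀ x : ℝ, x ≠ a → ContDiffAt ℝ 2 h x)
    (hpos : ∀ x, a < x → 0 < deriv h x)
    (hint : IntegrableOn (fun y => |deriv h y| * Real.exp ((2 * μ / σ ^ 2) * (y - a))) (Set.Iic a))
    (A B : ℝ) : Continuous (gfun μ σ a h A B) :=
  continuous_iff_continuousAt.2 fun x =>
    (gfun_hasDerivAt hμ hσ hconv hcont ha hC2 hpos hint A B x).differentiableAt.continuousAt

lemma gfun_deriv (hμ : 0 < μ) (hσ : 0 < σ)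
    (hconv : ConvexOn ℝ Set.univ h) (hcont : Continuous h) (ha : h a = 0)
    (hC2 : ∀ x : ℝ, x ≠ a → ContDiffAt ℝ 2 h x)
    (hpos : ∀ x, a < x → 0 < deriv h x)
    (hint : IntegrableOn (fun y => |deriv h y| * Real.exp ((2 * μ / σ ^ 2) * (y - a))) (Set.Iic a))
    (A B x : ℝ) :
    deriv (gfun μ σ a h A B) x
      = (2 * μ / σ ^ 2) * Real.exp (-(2 * μ / σ ^ 2) * (x - a)) * F1 μ σ a h B x :=
  (gfun_hasDerivAt hμ hσ hconv hcont ha hC2 hpos hint A B x).deriv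

lemma gfun_critical (hμ : 0 < μ) (hσ : 0 < σ)
    (hconv : ConvexOn ℝ Set.univ h) (hcont : Continuous h) (ha : h a = 0)
    (hC2 : ∀ x : ℝ, x ≠ a → ContDiffAt ℝ 2 h x)
    (hpos : ∀ x, a < x → 0 < deriv h x)
    (hint : IntegrableOn (fun y => |deriv h y| * Real.exp ((2 * μ / σ ^ 2) * (y - a))) (Set.Iic a))
    (A B c : ℝ) (hz : F1 μ σ a h B c = 0) :
    gfun μ σ a h A B c = A - h c / μ := by
  set L := 2 * μ / σ ^ 2 with hLdef
  have hμ' : μ ≠ 0 := ne_of_gt hμ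
  have hB2 : B * μ = h c * Real.exp (L * (c - a))
      - L * Real.exp (-(L * a)) * Jfun a h L c := by
    have := F1_repr hμ hσ hconv hcont ha hC2 hpos hint B c
    rw [hz] at this
    have hμinv : μ * μ⁻¹ = 1 := mul_inv_cancel₀ hμ'
    linear_combination (-μ) * this + (h c * Real.exp (L * (c - a))
      - L * Real.exp (-(L * a)) * Jfun a h L c) * hμinv
  rw [gfun_repr]
  have e2 : Real.exp (-L * (c - a)) * Real.exp (L * (c - a)) = 1 := by
    rw [← Real.exp_add]; ring_nf; exact Real.exp_zero
  have e3 : Real.exp (-L * (c - a)) * Real.exp (-(L * a)) = Real.exp (-(L * c)) := by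
    rw [← Real.exp_add]; ring_nf
  have e3' : Real.exp (-L * (c - a)) * Real.exp (-(L * a)) = Real.exp (-L * c) := by
    rw [← Real.exp_add]; ring_nf
  have hμinv : μ * μ⁻¹ = 1 := mul_inv_cancel₀ hμ'
  linear_combination (-(Real.exp (-L * (c - a)))/μ) * hB2 + (-(h c/μ)) * e2
    + (L/μ * Jfun a h L c) * e3' + (B * Real.exp (-L * (c - a))) * hμinv

lemma gfun_translate (A B x : ℝ) :
    gfun μ σ a h A B x = A + gfun μ σ a h 0 B x := by
  unfold gfun; ring

lemma gfun_Bdiff (A B B' x : ℝ) :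
    gfun μ σ a h A B x - gfun μ σ a h A B' x = (B' - B) * Real.exp (-(2 * μ / σ ^ 2) * (x - a)) := by
  unfold gfun; ring

end Aux

set_option maxHeartbeats 1000000 in
theorem stmt11 (μ σ a : ℝ) (h : ℝ → ℝ)
    (hμ : 0 < μ) (hσ : 0 < σ)
    (hconv : ConvexOn ℝ Set.univ h)
    (hcont : Continuous h)
    (hnonneg : ∀ x, 0 ≤ h x)
    (ha : h a = 0)
    (hC2 : ∀ x : ℝ, x ≠ a → ContDiffAt ℝ 2 h x)
    (hneg : ∀ x, x < a → deriv h x < 0)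
    (hpos : ∀ x, a < x → 0 < deriv h x)
    (hint : IntegrableOn (fun y => |deriv h y| * Real.exp ((2 * μ / σ ^ 2) * (y - a))) (Set.Iic a))
    (x1 x2 : ℝ → ℝ)
    (hx1 : ∀ B ∈ Set.Ioo 0 (Bbar μ σ a h), x1 B < a ∧ F1 μ σ a h B (x1 B) = 0)
    (hx2 : ∀ B : ℝ, 0 < B → a < x2 B ∧ F1 μ σ a h B (x2 B) = 0)
    (k ℓ : ℝ) (hk : 0 < k) (hl : 0 < ℓ) (B₁ : ℝ)
    (hB₁ : B₁ ∈ Set.Ioo 0 (Bbar μ σ a h) ∧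
      gfun μ σ a h 0 B₁ (x2 B₁) - gfun μ σ a h 0 B₁ (x1 B₁) = k + ℓ)
    (Ufun ufun : ℝ → ℝ → ℝ)
    (hUu : ∀ B ∈ Set.Ioo B₁ (Bbar μ σ a h),
      ∀ A ∈ Set.Ioc (h (x2 B) / μ + ℓ) (h (x1 B) / μ - k),
        x1 B < Ufun A B ∧ Ufun A B < x2 B ∧ x2 B < ufun A B ∧
        gfun μ σ a h A B (Ufun A B) = ℓ ∧ gfun μ σ a h A B (ufun A B) = ℓ ∧
        0 < deriv (gfun μ σ a h A B) (Ufun A B) ∧ deriv (gfun μ σ a h A B) (ufun A B) < 0)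
    :
    ∀ B ∈ Set.Ioo B₁ (Bbar μ σ a h),
      (∀ A ∈ Set.Ioo (h (x2 B) / μ + ℓ) (h (x1 B) / μ - k),
         HasDerivAt (fun A₀ => ∫ x in Ufun A₀ B..ufun A₀ B, (gfun μ σ a h A₀ B x - ℓ))
           (ufun A B - Ufun A B) A ∧
         0 < ufun A B - Ufun A B) ∧
      ContinuousOn (deriv (fun A₀ => ∫ x in Ufun A₀ B..ufun A₀ B, (gfun μ σ a h A₀ B x - ℓ)))
        (Set.Ioo (h (x2 B) / μ + ℓ) (h (x1 B) / μ - k)) ∧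
      StrictMonoOn (fun A₀ => ∫ x in Ufun A₀ B..ufun A₀ B, (gfun μ σ a h A₀ B x - ℓ))
        (Set.Ioo (h (x2 B) / μ + ℓ) (h (x1 B) / μ - k)) ∧
      Tendsto (fun A₀ => ∫ x in Ufun A₀ B..ufun A₀ B, (gfun μ σ a h A₀ B x - ℓ))
        (nhdsWithin (h (x2 B) / μ + ℓ) (Set.Ioi (h (x2 B) / μ + ℓ))) (nhds 0) := by
  intro B hB
  obtain ⟨hBlo, hBhi⟩ := hB
  have hBpos : 0 < B := lt_trans hB₁.1.1 hBlo
  have hBmem : B ∈ Set.Ioo 0 (Bbar μ σ a h) := ⟨hBpos, hBhi⟩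
  obtain ⟨hx1a, hx1z⟩ := hx1 B hBmem
  obtain ⟨hx2a, hx2z⟩ := hx2 B hBpos
  have hL : 0 < 2 * μ / σ ^ 2 := by positivity
  have hx12 : x1 B < x2 B := lt_trans hx1a hx2a
  -- F1 sign facts
  have hMono := F1_strictMonoOn hμ hσ hconv hcont hC2 hneg hpos hint B
  have hAnti := F1_strictAntiOn hμ hσ hconv hcont hC2 hpos hint B
  have hF1a : F1 μ σ a h B a = B := by
    unfold F1; simp
  have hF1pos : ∀ x ∈ Set.Ioo (x1 B) (x2 B), 0 < F1 μ σ a h B x := by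
    intro x hx
    rcases le_or_gt x a with hxa | hxa
    · have := hMono (le_of_lt hx1a) hxa hx.1
      rwa [hx1z] at this
    · have := hAnti (le_of_lt hxa) (le_of_lt hx2a) hx.2
      rwa [hx2z] at this
  have hF1negR : ∀ x, x2 B < x → F1 μ σ a h B x < 0 := by
    intro x hx
    have := hAnti (le_of_lt hx2a) (le_of_lt (lt_trans hx2a hx)) hx
    rwa [hx2z] at this
  have hF1negL : ∀ x, x < x1 B → F1 μ σ a h B x < 0 := by
    intro x hx
    have := hMono (le_of_lt (lt_trans hx hx1a)) (le_of_lt hx1a) hx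
    rwa [hx1z] at this
  -- G monotonicity (for all A simultaneously)
  have hGcont : ∀ A, Continuous (gfun μ σ a h A B) := fun A =>
    gfun_continuous hμ hσ hconv hcont ha hC2 hpos hint A B
  have hGmono : ∀ A, StrictMonoOn (gfun μ σ a h A B) (Set.Icc (x1 B) (x2 B)) := by
    intro A
    apply strictMonoOn_of_deriv_pos (convex_Icc _ _) (hGcont A).continuousOn
    intro x hx
    rw [interior_Icc] at hx
    rw [gfun_deriv hμ hσ hconv hcont ha hC2 hpos hint A B x]
    exact mul_pos (mul_pos hL (Real.exp_pos _)) (hF1pos x hx)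
  have hGantiR : ∀ A, StrictAntiOn (gfun μ σ a h A B) (Set.Ici (x2 B)) := by
    intro A
    apply strictAntiOn_of_deriv_neg (convex_Ici _) (hGcont A).continuousOn
    intro x hx
    rw [interior_Ici] at hx
    rw [gfun_deriv hμ hσ hconv hcont ha hC2 hpos hint A B x]
    exact mul_neg_of_pos_of_neg (mul_pos hL (Real.exp_pos _)) (hF1negR x hx)
  have hGantiL : ∀ A, StrictAntiOn (gfun μ σ a h A B) (Set.Iic (x1 B)) := by
    intro A
    apply strictAntiOn_of_deriv_neg (convex_Iic _) (hGcont A).continuousOn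
    intro x hx
    rw [interior_Iic] at hx
    rw [gfun_deriv hμ hσ hconv hcont ha hC2 hpos hint A B x]
    exact mul_neg_of_pos_of_neg (mul_pos hL (Real.exp_pos _)) (hF1negL x hx)
  -- non-strict versions
  have hGmono_le : ∀ A p q, x1 B ≤ p → q ≤ x2 B → p ≤ q →
      gfun μ σ a h A B p ≤ gfun μ σ a h A B q := by
    intro A p q hp hq hpq
    rcases eq_or_lt_of_le hpq with rfl | hlt
    · exact le_refl _
    · exact le_of_lt (hGmono A ⟨hp, le_of_lt (lt_of_lt_of_le hlt hq)⟩
        ⟨le_trans hp hpq, hq⟩ hlt)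
  have hGantiR_le : ∀ A p q, x2 B ≤ p → p ≤ q →
      gfun μ σ a h A B q ≤ gfun μ σ a h A B p := by
    intro A p q hp hpq
    rcases eq_or_lt_of_le hpq with rfl | hlt
    · exact le_refl _
    · exact le_of_lt (hGantiR A hp (le_trans hp hpq) hlt)
  -- critical values
  have hGx2 : ∀ A, gfun μ σ a h A B (x2 B) = A - h (x2 B) / μ := fun A =>
    gfun_critical hμ hσ hconv hcont ha hC2 hpos hint A B _ hx2z
  have hGx1 : ∀ A, gfun μ σ a h A B (x1 B) = A - h (x1 B) / μ := fun A =>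
    gfun_critical hμ hσ hconv hcont ha hC2 hpos hint A B _ hx1z
  -- s < t
  have hst : h (x2 B) / μ + ℓ < h (x1 B) / μ - k := by
    obtain ⟨⟨hB₁pos, hB₁hi⟩, hgt⟩ := hB₁
    obtain ⟨hx1a', hx1z'⟩ := hx1 B₁ ⟨hB₁pos, hB₁hi⟩
    obtain ⟨hx2a', hx2z'⟩ := hx2 B₁ hB₁pos
    have h2 : gfun μ σ a h 0 B (x2 B₁) ≤ gfun μ σ a h 0 B (x2 B) := by
      rcases le_or_gt (x2 B₁) (x2 B) with hc | hc
      · exact hGmono_le 0 _ _ (le_of_lt (lt_trans hx1a hx2a')) (le_refl _) hc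
      · exact le_of_lt (hGantiR 0 (Set.mem_Ici.2 (le_refl _)) (Set.mem_Ici.2 (le_of_lt hc)) hc)
    have h1 : gfun μ σ a h 0 B (x1 B) ≤ gfun μ σ a h 0 B (x1 B₁) := by
      rcases le_or_gt (x1 B) (x1 B₁) with hc | hc
      · exact hGmono_le 0 _ _ (le_refl _) (le_of_lt (lt_trans hx1a' hx2a)) hc
      · exact le_of_lt (hGantiL 0 (Set.mem_Iic.2 (le_of_lt hc)) (Set.mem_Iic.2 (le_refl _)) hc)
    have hd2 := gfun_Bdiff (μ := μ) (σ := σ) (a := a) (h := h) 0 B B₁ (x2 B₁)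
    have hd1 := gfun_Bdiff (μ := μ) (σ := σ) (a := a) (h := h) 0 B B₁ (x1 B₁)
    have hexplt : Real.exp (-(2 * μ / σ ^ 2) * (x2 B₁ - a))
        < Real.exp (-(2 * μ / σ ^ 2) * (x1 B₁ - a)) := by
      apply Real.exp_lt_exp.2
      have : x1 B₁ < x2 B₁ := lt_trans hx1a' hx2a'
      nlinarith
    have e2 := hGx2 0
    have e1 := hGx1 0
    have hprod : 0 < (B - B₁) * (Real.exp (-(2 * μ / σ ^ 2) * (x1 B₁ - a))
        - Real.exp (-(2 * μ / σ ^ 2) * (x2 B₁ - a))) :=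
      mul_pos (sub_pos.2 hBlo) (sub_pos.2 hexplt)
    nlinarith [h1, h2, hd1, hd2, hgt, e1, e2, hprod]
  have habs_sub : ∀ p q : ℝ, |p - q| ≤ |p| + |q| := fun p q => by
    calc |p - q| = |p + -q| := by rw [sub_eq_add_neg]
    _ ≤ |p| + |-q| := abs_add_le _ _
    _ = |p| + |q| := by rw [abs_neg]
  have htrans : ∀ A A' x : ℝ, gfun μ σ a h A' B x = gfun μ σ a h A B x + (A' - A) := by
    intro A A' x
    rw [gfun_translate A' B x, gfun_translate A B x]
    ring
  have hfacts : ∀ A ∈ Set.Ioo (h (x2 B) / μ + ℓ) (h (x1 B) / μ - k),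
      x1 B < Ufun A B ∧ Ufun A B < x2 B ∧ x2 B < ufun A B ∧
      gfun μ σ a h A B (Ufun A B) = ℓ ∧ gfun μ σ a h A B (ufun A B) = ℓ := by
    intro A hA
    obtain ⟨h1, h2, h3, h4, h5, _, _⟩ := hUu B ⟨hBlo, hBhi⟩ A ⟨hA.1, le_of_lt hA.2⟩
    exact ⟨h1, h2, h3, h4, h5⟩
  have hfint : ∀ A p q : ℝ, IntervalIntegrable (fun x => gfun μ σ a h A B x - ℓ) volume p q :=
    fun A p q => ((hGcont A).sub continuous_const).intervalIntegrable p q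
  set s := h (x2 B) / μ + ℓ with hsdef
  set t := h (x1 B) / μ - k with htdef
  clear_value s t
  -- strict monotonicity of U and u in A
  have hmonoU : ∀ A ∈ Set.Ioo s t, ∀ A' ∈ Set.Ioo s t, A < A' → Ufun A' B < Ufun A B := by
    intro A hA A' hA' hAA'
    obtain ⟨u1, u2, u3, u4, u5⟩ := hfacts A hA
    obtain ⟨v1, v2, v3, v4, v5⟩ := hfacts A' hA'
    by_contra hcon
    push_neg at hcon
    have hmle : gfun μ σ a h A B (Ufun A B) ≤ gfun μ σ a h A B (Ufun A' B) :=
      hGmono_le A _ _ (le_of_lt u1) (le_of_lt v2) hcon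
    have e := htrans A A' (Ufun A' B)
    rw [v4] at e
    linarith
  have hmonou : ∀ A ∈ Set.Ioo s t, ∀ A' ∈ Set.Ioo s t, A < A' → ufun A B < ufun A' B := by
    intro A hA A' hA' hAA'
    obtain ⟨u1, u2, u3, u4, u5⟩ := hfacts A hA
    obtain ⟨v1, v2, v3, v4, v5⟩ := hfacts A' hA'
    by_contra hcon
    push_neg at hcon
    have hmle : gfun μ σ a h A B (ufun A B) ≤ gfun μ σ a h A B (ufun A' B) :=
      hGantiR_le A _ _ (le_of_lt v3) hcon
    have e := htrans A A' (ufun A' B)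
    rw [v5] at e
    linarith
  -- continuity of U and u in A
  have hcontUu : ∀ A ∈ Set.Ioo s t, ∀ ε > 0, ∀ᶠ A' in 𝓝 A, A' ∈ Set.Ioo s t →
      |ufun A' B - ufun A B| < ε ∧ |Ufun A' B - Ufun A B| < ε := by
    intro A hA ε hε
    obtain ⟨u1, u2, u3, u4, u5⟩ := hfacts A hA
    have ev1 : ∀ᶠ A' in 𝓝 A, A' ∈ Set.Ioo s t → ufun A' B < ufun A B + ε := by
      have hδ1 : 0 < gfun μ σ a h A B (ufun A B) - gfun μ σ a h A B (ufun A B + ε) :=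
        sub_pos.2 (hGantiR A (Set.mem_Ici.2 (le_of_lt u3))
          (Set.mem_Ici.2 (by linarith)) (by linarith))
      filter_upwards [eventually_abs_sub_lt A hδ1] with A' hclose hA'mem
      obtain ⟨v1, v2, v3, v4, v5⟩ := hfacts A' hA'mem
      by_contra hcon
      push_neg at hcon
      have h1 : gfun μ σ a h A B (ufun A' B) ≤ gfun μ σ a h A B (ufun A B + ε) :=
        hGantiR_le A _ _ (by linarith) hcon
      have e := htrans A A' (ufun A' B)
      rw [v5] at e
      have := le_abs_self (A' - A)
      have := neg_abs_le (A' - A)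
      linarith
    have ev2 : ∀ᶠ A' in 𝓝 A, A' ∈ Set.Ioo s t → ufun A B - ε < ufun A' B := by
      by_cases hc : x2 B < ufun A B - ε
      · have hδ2 : 0 < gfun μ σ a h A B (ufun A B - ε) - gfun μ σ a h A B (ufun A B) :=
          sub_pos.2 (hGantiR A (Set.mem_Ici.2 (le_of_lt hc))
            (Set.mem_Ici.2 (by linarith)) (by linarith))
        filter_upwards [eventually_abs_sub_lt A hδ2] with A' hclose hA'mem
        obtain ⟨v1, v2, v3, v4, v5⟩ := hfacts A' hA'mem
        by_contra hcon
        push_neg at hcon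
        have h1 : gfun μ σ a h A B (ufun A B - ε) ≤ gfun μ σ a h A B (ufun A' B) :=
          hGantiR_le A _ _ (le_of_lt v3) hcon
        have e := htrans A A' (ufun A' B)
        rw [v5] at e
        have := le_abs_self (A' - A)
        have := neg_abs_le (A' - A)
        linarith
      · push_neg at hc
        filter_upwards with A' hA'mem
        obtain ⟨v1, v2, v3, v4, v5⟩ := hfacts A' hA'mem
        linarith
    have ev3 : ∀ᶠ A' in 𝓝 A, A' ∈ Set.Ioo s t → Ufun A' B < Ufun A B + ε := by
      by_cases hc : Ufun A B + ε < x2 B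
      · have hδ3 : 0 < gfun μ σ a h A B (Ufun A B + ε) - gfun μ σ a h A B (Ufun A B) :=
          sub_pos.2 (hGmono A ⟨le_of_lt u1, by linarith⟩
            ⟨by linarith [le_of_lt u1], le_of_lt hc⟩ (by linarith))
        filter_upwards [eventually_abs_sub_lt A hδ3] with A' hclose hA'mem
        obtain ⟨v1, v2, v3, v4, v5⟩ := hfacts A' hA'mem
        by_contra hcon
        push_neg at hcon
        have h1 : gfun μ σ a h A B (Ufun A B + ε) ≤ gfun μ σ a h A B (Ufun A' B) :=
          hGmono_le A _ _ (by linarith [le_of_lt u1]) (le_of_lt v2) hcon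
        have e := htrans A A' (Ufun A' B)
        rw [v4] at e
        have := le_abs_self (A' - A)
        have := neg_abs_le (A' - A)
        linarith
      · push_neg at hc
        filter_upwards with A' hA'mem
        obtain ⟨v1, v2, v3, v4, v5⟩ := hfacts A' hA'mem
        linarith
    have ev4 : ∀ᶠ A' in 𝓝 A, A' ∈ Set.Ioo s t → Ufun A B - ε < Ufun A' B := by
      by_cases hc : x1 B < Ufun A B - ε
      · have hδ4 : 0 < gfun μ σ a h A B (Ufun A B) - gfun μ σ a h A B (Ufun A B - ε) :=
          sub_pos.2 (hGmono A ⟨le_of_lt hc, by linarith [le_of_lt u2]⟩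
            ⟨le_of_lt u1, le_of_lt u2⟩ (by linarith))
        filter_upwards [eventually_abs_sub_lt A hδ4] with A' hclose hA'mem
        obtain ⟨v1, v2, v3, v4, v5⟩ := hfacts A' hA'mem
        by_contra hcon
        push_neg at hcon
        have h1 : gfun μ σ a h A B (Ufun A' B) ≤ gfun μ σ a h A B (Ufun A B - ε) :=
          hGmono_le A _ _ (le_of_lt v1) (by linarith [le_of_lt u2]) hcon
        have e := htrans A A' (Ufun A' B)
        rw [v4] at e
        have := le_abs_self (A' - A)
        have := neg_abs_le (A' - A)
        linarith
      · push_neg at hc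
        filter_upwards with A' hA'mem
        obtain ⟨v1, v2, v3, v4, v5⟩ := hfacts A' hA'mem
        linarith
    filter_upwards [ev1, ev2, ev3, ev4] with A' h1 h2 h3 h4 hA'mem
    constructor
    · rw [abs_sub_lt_iff]
      exact ⟨by linarith [h1 hA'mem], by linarith [h2 hA'mem]⟩
    · rw [abs_sub_lt_iff]
      exact ⟨by linarith [h3 hA'mem], by linarith [h4 hA'mem]⟩
  -- the derivative
  have hΛkey : ∀ A ∈ Set.Ioo s t,
      HasDerivAt (fun A₀ => ∫ x in Ufun A₀ B..ufun A₀ B, (gfun μ σ a h A₀ B x - ℓ))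
        (ufun A B - Ufun A B) A := by
    intro A hA
    obtain ⟨u1, u2, u3, u4, u5⟩ := hfacts A hA
    rw [hasDerivAt_iff_isLittleO, Asymptotics.isLittleO_iff]
    intro c hc
    have hev1 : ∀ᶠ A' in 𝓝 A, A' ∈ Set.Ioo s t :=
      Filter.eventually_of_mem (isOpen_Ioo.mem_nhds hA) (fun x hx => hx)
    filter_upwards [hev1, hcontUu A hA (c/4) (by positivity)] with A' hA' hclose
    obtain ⟨hdu, hdU⟩ := hclose hA'
    obtain ⟨v1, v2, v3, v4, v5⟩ := hfacts A' hA'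
    have hGu' : gfun μ σ a h A B (ufun A' B) = ℓ - (A' - A) := by
      have e := htrans A A' (ufun A' B); rw [v5] at e; linarith
    have hGU' : gfun μ σ a h A B (Ufun A' B) = ℓ - (A' - A) := by
      have e := htrans A A' (Ufun A' B); rw [v4] at e; linarith
    -- decomposition of the integral
    have hsplit : (∫ x in Ufun A' B..ufun A' B, (gfun μ σ a h A B x - ℓ))
        = (∫ x in Ufun A' B..Ufun A B, (gfun μ σ a h A B x - ℓ))
          + (∫ x in Ufun A B..ufun A B, (gfun μ σ a h A B x - ℓ))
          + (∫ x in ufun A B..ufun A' B, (gfun μ σ a h A B x - ℓ)) := by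
      rw [intervalIntegral.integral_add_adjacent_intervals (hfint A _ _) (hfint A _ _),
        intervalIntegral.integral_add_adjacent_intervals (hfint A _ _) (hfint A _ _)]
    have hplus : (∫ x in Ufun A' B..ufun A' B, (gfun μ σ a h A' B x - ℓ))
        = (∫ x in Ufun A' B..ufun A' B, (gfun μ σ a h A B x - ℓ))
          + (A' - A) * (ufun A' B - Ufun A' B) := by
      calc (∫ x in Ufun A' B..ufun A' B, (gfun μ σ a h A' B x - ℓ))
          = ∫ x in Ufun A' B..ufun A' B, ((gfun μ σ a h A B x - ℓ) + (A' - A)) := by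
            apply intervalIntegral.integral_congr
            intro x _
            show gfun μ σ a h A' B x - ℓ = (gfun μ σ a h A B x - ℓ) + (A' - A)
            rw [htrans A A' x]; ring
        _ = (∫ x in Ufun A' B..ufun A' B, (gfun μ σ a h A B x - ℓ))
            + (A' - A) * (ufun A' B - Ufun A' B) := by
            rw [intervalIntegral.integral_add (hfint A _ _) intervalIntegrable_const,
              intervalIntegral.integral_const, smul_eq_mul]
            ring
    -- bounds on the boundary integrals
    have hbu : ‖∫ x in ufun A B..ufun A' B, (gfun μ σ a h A B x - ℓ)‖
        ≤ |A' - A| * |ufun A' B - ufun A B| := by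
      apply intervalIntegral.norm_integral_le_of_norm_le_const
      intro x hx
      rcases Set.mem_uIoc.1 hx with ⟨hp1, hp2⟩ | ⟨hp1, hp2⟩
      · have hg1 : gfun μ σ a h A B x ≤ gfun μ σ a h A B (ufun A B) :=
          hGantiR_le A _ _ (le_of_lt u3) (le_of_lt hp1)
        have hg2 : gfun μ σ a h A B (ufun A' B) ≤ gfun μ σ a h A B x :=
          hGantiR_le A _ _ (by linarith) hp2
        rw [Real.norm_eq_abs, abs_le]
        constructor
        · have h5 := neg_abs_le (A' - A); have h6 := le_abs_self (A' - A)
          rw [hGu'] at hg2; linarith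
        · have h5 := neg_abs_le (A' - A); have h6 := le_abs_self (A' - A)
          rw [u5] at hg1; linarith
      · have hg1 : gfun μ σ a h A B x ≤ gfun μ σ a h A B (ufun A' B) :=
          hGantiR_le A _ _ (le_of_lt v3) (le_of_lt hp1)
        have hg2 : gfun μ σ a h A B (ufun A B) ≤ gfun μ σ a h A B x :=
          hGantiR_le A _ _ (by linarith) hp2
        rw [Real.norm_eq_abs, abs_le]
        constructor
        · have h5 := neg_abs_le (A' - A); have h6 := le_abs_self (A' - A)
          rw [u5] at hg2; linarith
        · have h5 := neg_abs_le (A' - A); have h6 := le_abs_self (A' - A)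
          rw [hGu'] at hg1; linarith
    have hbU : ‖∫ x in Ufun A' B..Ufun A B, (gfun μ σ a h A B x - ℓ)‖
        ≤ |A' - A| * |Ufun A B - Ufun A' B| := by
      apply intervalIntegral.norm_integral_le_of_norm_le_const
      intro x hx
      rcases Set.mem_uIoc.1 hx with ⟨hp1, hp2⟩ | ⟨hp1, hp2⟩
      · -- Ufun A' B < x ≤ Ufun A B
        have hg1 : gfun μ σ a h A B x ≤ gfun μ σ a h A B (Ufun A B) :=
          hGmono_le A _ _ (by linarith [le_of_lt v1]) (le_of_lt u2) hp2
        have hg2 : gfun μ σ a h A B (Ufun A' B) ≤ gfun μ σ a h A B x :=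
          hGmono_le A _ _ (le_of_lt v1) (by linarith [le_of_lt u2]) (le_of_lt hp1)
        rw [Real.norm_eq_abs, abs_le]
        constructor
        · have h5 := neg_abs_le (A' - A); have h6 := le_abs_self (A' - A)
          rw [hGU'] at hg2; linarith
        · have h5 := neg_abs_le (A' - A); have h6 := le_abs_self (A' - A)
          rw [u4] at hg1; linarith
      · -- Ufun A B < x ≤ Ufun A' B
        have hg1 : gfun μ σ a h A B x ≤ gfun μ σ a h A B (Ufun A' B) :=
          hGmono_le A _ _ (by linarith [le_of_lt u1]) (le_of_lt v2) hp2
        have hg2 : gfun μ σ a h A B (Ufun A B) ≤ gfun μ σ a h A B x :=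
          hGmono_le A _ _ (le_of_lt u1) (by linarith [le_of_lt v2]) (le_of_lt hp1)
        rw [Real.norm_eq_abs, abs_le]
        constructor
        · have h5 := neg_abs_le (A' - A); have h6 := le_abs_self (A' - A)
          rw [u4] at hg2; linarith
        · have h5 := neg_abs_le (A' - A); have h6 := le_abs_self (A' - A)
          rw [hGU'] at hg1; linarith
    -- assemble
    simp only [smul_eq_mul, Real.norm_eq_abs]
    rw [hplus, hsplit]
    set I1 := ∫ x in Ufun A' B..Ufun A B, (gfun μ σ a h A B x - ℓ) with hI1
    set I2 := ∫ x in Ufun A B..ufun A B, (gfun μ σ a h A B x - ℓ) with hI2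
    set I3 := ∫ x in ufun A B..ufun A' B, (gfun μ σ a h A B x - ℓ) with hI3
    have hrear : I1 + I2 + I3 + (A' - A) * (ufun A' B - Ufun A' B) - I2
          - (A' - A) * (ufun A B - Ufun A B)
        = I1 + I3 + (A' - A) * ((ufun A' B - ufun A B) - (Ufun A' B - Ufun A B)) := by ring
    rw [hrear]
    have tri : |I1 + I3 + (A' - A) * ((ufun A' B - ufun A B) - (Ufun A' B - Ufun A B))|
        ≤ |I1| + |I3| + |(A' - A) * ((ufun A' B - ufun A B) - (Ufun A' B - Ufun A B))| :=
      (abs_add_le _ _).trans (add_le_add_left (abs_add_le I1 I3) _)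
    have hx3 : |(A' - A) * ((ufun A' B - ufun A B) - (Ufun A' B - Ufun A B))|
        ≤ |A' - A| * (|ufun A' B - ufun A B| + |Ufun A' B - Ufun A B|) := by
      rw [abs_mul]
      exact mul_le_mul_of_nonneg_left (habs_sub _ _) (abs_nonneg _)
    rw [Real.norm_eq_abs] at hbu hbU
    have hUcomm : |Ufun A B - Ufun A' B| = |Ufun A' B - Ufun A B| := abs_sub_comm _ _
    rw [hUcomm] at hbU
    have h0 : (0:ℝ) ≤ |A' - A| := abs_nonneg _
    have hsum : |Ufun A' B - Ufun A B| + |ufun A' B - ufun A B|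
        + (|ufun A' B - ufun A B| + |Ufun A' B - Ufun A B|) ≤ c := by linarith
    have hprod := mul_le_mul_of_nonneg_left hsum h0
    have hring : |A' - A| * |Ufun A' B - Ufun A B| + |A' - A| * |ufun A' B - ufun A B|
          + |A' - A| * (|ufun A' B - ufun A B| + |Ufun A' B - Ufun A B|)
        = |A' - A| * (|Ufun A' B - Ufun A B| + |ufun A' B - ufun A B|
          + (|ufun A' B - ufun A B| + |Ufun A' B - Ufun A B|)) := by ring
    have hcomm : |A' - A| * c = c * |A' - A| := mul_comm _ _
    linarith [tri, hbu, hbU, hx3, hprod, hring, hcomm]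
  -- positivity of the derivative
  have hΛpos : ∀ A ∈ Set.Ioo s t, 0 < ufun A B - Ufun A B := by
    intro A hA
    obtain ⟨u1, u2, u3, _, _⟩ := hfacts A hA
    linarith
  -- continuity of A ↦ u - U on Ioo s t
  have hcontdiff : ContinuousOn (fun A => ufun A B - Ufun A B) (Set.Ioo s t) := by
    intro A hA
    rw [ContinuousWithinAt, Metric.tendsto_nhdsWithin_nhds]
    intro ε hε
    obtain ⟨δ, hδpos, hδ⟩ := Metric.eventually_nhds_iff.1 (hcontUu A hA (ε/2) (by positivity))
    refine ⟨δ, hδpos, fun {A'} hA' hdist => ?_⟩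
    obtain ⟨d1, d2⟩ := hδ (by rwa [Real.dist_eq] at hdist) hA'
    rw [Real.dist_eq]
    have := habs_sub (ufun A' B - ufun A B) (Ufun A' B - Ufun A B)
    calc |ufun A' B - Ufun A' B - (ufun A B - Ufun A B)|
        = |(ufun A' B - ufun A B) - (Ufun A' B - Ufun A B)| := by ring_nf
      _ ≤ |ufun A' B - ufun A B| + |Ufun A' B - Ufun A B| := this
      _ < ε := by linarith
  refine ⟨fun A hA => ⟨hΛkey A hA, hΛpos A hA⟩, ?_, ?_, ?_⟩
  · exact hcontdiff.congr (fun A hA => (hΛkey A hA).deriv)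
  · have hΛconts : ContinuousOn
        (fun A₀ => ∫ x in Ufun A₀ B..ufun A₀ B, (gfun μ σ a h A₀ B x - ℓ)) (Set.Ioo s t) :=
      fun A hA => ((hΛkey A hA).differentiableAt.continuousAt).continuousWithinAt
    apply strictMonoOn_of_deriv_pos (convex_Ioo s t) hΛconts
    intro A hA
    rw [interior_Ioo] at hA
    rw [(hΛkey A hA).deriv]
    exact hΛpos A hA
  · have hA₀ : (s + t) / 2 ∈ Set.Ioo s t := ⟨by linarith, by linarith⟩
    have hbounds : ∀ A ∈ Set.Ioo s ((s + t) / 2),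
        0 ≤ (∫ x in Ufun A B..ufun A B, (gfun μ σ a h A B x - ℓ)) ∧
        (∫ x in Ufun A B..ufun A B, (gfun μ σ a h A B x - ℓ))
          ≤ (A - s) * (ufun ((s + t) / 2) B - Ufun ((s + t) / 2) B) := by
      intro A hA
      have hA' : A ∈ Set.Ioo s t := ⟨hA.1, lt_trans hA.2 hA₀.2⟩
      obtain ⟨u1, u2, u3, u4, u5⟩ := hfacts A hA'
      constructor
      · apply intervalIntegral.integral_nonneg (by linarith : Ufun A B ≤ ufun A B)
        intro x hx
        rcases le_total x (x2 B) with hcase | hcase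
        · have hle := hGmono_le A (Ufun A B) x (le_of_lt u1) hcase hx.1
          rw [u4] at hle
          linarith
        · have hle := hGantiR_le A x (ufun A B) hcase hx.2
          rw [u5] at hle
          linarith
      · have hle1 : (∫ x in Ufun A B..ufun A B, (gfun μ σ a h A B x - ℓ))
            ≤ ∫ _x in Ufun A B..ufun A B, (A - s) := by
          apply intervalIntegral.integral_mono_on (by linarith : Ufun A B ≤ ufun A B)
            (hfint A _ _) intervalIntegrable_const
          intro x hx
          show gfun μ σ a h A B x - ℓ ≤ A - s
          rcases le_total x (x2 B) with hcase | hcase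
          · have hle := hGmono_le A x (x2 B) (le_trans (le_of_lt u1) hx.1) (le_refl _) hcase
            rw [hGx2 A] at hle
            linarith [hsdef.le, hsdef.ge]
          · have hle := hGantiR_le A (x2 B) x (le_refl _) hcase
            rw [hGx2 A] at hle
            linarith [hsdef.le, hsdef.ge]
        rw [intervalIntegral.integral_const, smul_eq_mul] at hle1
        have hu : ufun A B < ufun ((s + t) / 2) B := hmonou A hA' _ hA₀ hA.2
        have hU : Ufun ((s + t) / 2) B < Ufun A B := hmonoU A hA' _ hA₀ hA.2
        have hAs : 0 < A - s := by linarith [hA.1]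
        have hmul : (A - s) * (ufun A B - Ufun A B)
            ≤ (A - s) * (ufun ((s + t) / 2) B - Ufun ((s + t) / 2) B) :=
          mul_le_mul_of_nonneg_left (by linarith) (le_of_lt hAs)
        have hc : (ufun A B - Ufun A B) * (A - s) = (A - s) * (ufun A B - Ufun A B) :=
          mul_comm _ _
        linarith [hle1, hmul, hc]
    have hup : Tendsto (fun A => (A - s) * (ufun ((s + t) / 2) B - Ufun ((s + t) / 2) B))
        (𝓝[>] s) (𝓝 0) := by
      have hcont2 : Tendsto (fun A : ℝ => (A - s) * (ufun ((s + t) / 2) B - Ufun ((s + t) / 2) B))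
          (𝓝 s) (𝓝 ((s - s) * (ufun ((s + t) / 2) B - Ufun ((s + t) / 2) B))) :=
        Continuous.tendsto (by fun_prop) s
      have := hcont2.mono_left (nhdsWithin_le_nhds (s := Set.Ioi s))
      simpa using this
    apply tendsto_of_tendsto_of_tendsto_of_le_of_le' tendsto_const_nhds hup
    · filter_upwards [Ioo_mem_nhdsGT (show s < (s + t) / 2 by linarith)] with A hA
      exact (hbounds A hA).1
    · filter_upwards [Ioo_mem_nhdsGT (show s < (s + t) / 2 by linarith)] with A hA
      exact (hbounds A hA).2
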